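/- Fix n ≥ 3 and define the Leibniz superalgebra SL on even basis {e₁,…,e_n, x} and odd basis {y₁,…,y_{n-1}} by: [e₁,e₁]=e₃, [e_i,e₁]=e_{i+1} (2≤i≤n-1), [y_j,e₁]=y_{j+1} (1≤j≤n-2), [e₁,y₁]=½y₂, [e_i,y₁]=½y_i (2≤i≤n-1), [y₁,y₁]=e₁, [y_j,y₁]=e_{j+1} (2≤j≤n-1), [e₁,x]=2e₁, [e_i,x]=2(i-1)e_i (2≤i≤n), [y_i,x]=(2i-1)y_i (1≤i≤n-1), [x,e₁]=-2e₁, [x,y₁]=-y₁, all other basis products zero. Then SL satisfies the Leibniz superidentity, SL is solvable, and its ideal N spanned by {e₁,…,e_n,y₁,…,y_{n-1}} is nilpotent with [SL,SL] ⊆ N. -/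

import Mathlib

lemma bilHelper {V : Type*} [AddCommGroup V] [Module ℂ V]
    (br : V →ₗ[ℂ] V →ₗ[ℂ] V) (P : Submodule ℂ V) (SA SB : Set V)
    (h : ∀ a ∈ SA, ∀ b ∈ SB, br a b ∈ P) :
    ∀ a ∈ Submodule.span ℂ SA, ∀ b ∈ Submodule.span ℂ SB, br a b ∈ P := by
  intro a ha b hb
  induction ha using Submodule.span_induction with
  | mem a ha =>
    induction hb using Submodule.span_induction with
    | mem b hb => exact h a ha b hb
    | zero => simp
    | add b1 b2 _ _ h1 h2 => rw [map_add]; exact P.add_mem h1 h2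
    | smul c b _ h1 => rw [map_smul]; exact P.smul_mem c h1
  | zero => simp
  | add a1 a2 _ _ h1 h2 => rw [map_add, LinearMap.add_apply]; exact P.add_mem h1 h2
  | smul c a _ h1 => rw [map_smul, LinearMap.smul_apply]; exact P.smul_mem c h1

lemma trilHelper {V : Type*} [AddCommGroup V] [Module ℂ V]
    (br : V →ₗ[ℂ] V →ₗ[ℂ] V) (s : ℂ) (SU SV SW : Set V)
    (h : ∀ u ∈ SU, ∀ v ∈ SV, ∀ w ∈ SW,
      br u (br v w) = br (br u v) w - s • br (br u w) v) :
    ∀ u ∈ Submodule.span ℂ SU, ∀ v ∈ Submodule.span ℂ SV, ∀ w ∈ Submodule.span ℂ SW,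
      br u (br v w) = br (br u v) w - s • br (br u w) v := by
  intro u hu v hv w hw
  induction hu using Submodule.span_induction with
  | mem u hu =>
    induction hv using Submodule.span_induction with
    | mem v hv =>
      induction hw using Submodule.span_induction with
      | mem w hw => exact h u hu v hv w hw
      | zero => simp
      | add w1 w2 _ _ h1 h2 =>
        simp only [map_add, LinearMap.add_apply, h1, h2]; module
      | smul c w _ h1 =>
        simp only [map_smul, LinearMap.smul_apply, h1]; module
    | zero => simp
    | add v1 v2 _ _ h1 h2 =>
      simp only [map_add, LinearMap.add_apply, h1, h2]; module
    | smul c v _ h1 =>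
      simp only [map_smul, LinearMap.smul_apply, h1]; module
  | zero => simp
  | add u1 u2 _ _ h1 h2 =>
    simp only [map_add, LinearMap.add_apply, h1, h2]; module
  | smul c u _ h1 =>
    simp only [map_smul, LinearMap.smul_apply, h1]; module


/-- Derived series: `derSeries br 0 = ⊤`, `derSeries br (k+1) = [derSeries br k, derSeries br k]`. -/
def derSeries {V : Type*} [AddCommGroup V] [Module ℂ V]
    (br : V →ₗ[ℂ] V →ₗ[ℂ] V) : ℕ → Submodule ℂ V
  | 0 => ⊤
  | k + 1 => Submodule.span ℂ
      {z | ∃ a ∈ derSeries br k, ∃ b ∈ derSeries br k, z = br a b}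

/-- Lower central series of a subspace N: `lcsIn br N 0 = N`,
`lcsIn br N (k+1) = [lcsIn br N k, N]`. -/
def lcsIn {V : Type*} [AddCommGroup V] [Module ℂ V]
    (br : V →ₗ[ℂ] V →ₗ[ℂ] V) (N : Submodule ℂ V) : ℕ → Submodule ℂ V
  | 0 => N
  | k + 1 => Submodule.span ℂ {z | ∃ a ∈ lcsIn br N k, ∃ b ∈ N, z = br a b}

set_option maxHeartbeats 4000000 in
/-- The superalgebra SL satisfies the Leibniz superidentity, is solvable, and the
subspace N spanned by the e's and y's is a nilpotent subalgebra with [SL,SL] ⊆ N. -/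
theorem statement13 {V : Type*} [AddCommGroup V] [Module ℂ V]
    (n : ℕ) (hn : 3 ≤ n)
    (bas : Module.Basis (Fin n ⊕ Unit ⊕ Fin (n - 1)) ℂ V)
    (eN yN : ℕ → V) (x : V)
    (heN : ∀ k (h : 1 ≤ k ∧ k ≤ n), eN k = bas (Sum.inl ⟨k - 1, by omega⟩))
    (heN0 : ∀ k, ¬(1 ≤ k ∧ k ≤ n) → eN k = 0)
    (hx : x = bas (Sum.inr (Sum.inl ())))
    (hyN : ∀ k (h : 1 ≤ k ∧ k ≤ n - 1), yN k = bas (Sum.inr (Sum.inr ⟨k - 1, by omega⟩)))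
    (hyN0 : ∀ k, ¬(1 ≤ k ∧ k ≤ n - 1) → yN k = 0)
    (br : V →ₗ[ℂ] V →ₗ[ℂ] V)
    -- multiplication table of SL:
    (hee1 : ∀ i, 1 ≤ i → i ≤ n → br (eN i) (eN 1) = if i = 1 then eN 3 else eN (i + 1))
    (hee0 : ∀ i j, 1 ≤ i → i ≤ n → 2 ≤ j → j ≤ n → br (eN i) (eN j) = 0)
    (hye1 : ∀ j, 1 ≤ j → j ≤ n - 1 → br (yN j) (eN 1) = yN (j + 1))
    (hye0 : ∀ j i, 1 ≤ j → j ≤ n - 1 → 2 ≤ i → i ≤ n → br (yN j) (eN i) = 0)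
    (hey1 : ∀ i, 1 ≤ i → i ≤ n →
      br (eN i) (yN 1) = if i = 1 then (1 / 2 : ℂ) • yN 2 else (1 / 2 : ℂ) • yN i)
    (hey0 : ∀ i j, 1 ≤ i → i ≤ n → 2 ≤ j → j ≤ n - 1 → br (eN i) (yN j) = 0)
    (hyy1 : ∀ j, 1 ≤ j → j ≤ n - 1 →
      br (yN j) (yN 1) = if j = 1 then eN 1 else eN (j + 1))
    (hyy0 : ∀ j k, 1 ≤ j → j ≤ n - 1 → 2 ≤ k → k ≤ n - 1 → br (yN j) (yN k) = 0)
    (hex : ∀ i, 1 ≤ i → i ≤ n →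
      br (eN i) x = (if i = 1 then (2 : ℂ) else 2 * ((i : ℂ) - 1)) • eN i)
    (hyx : ∀ i, 1 ≤ i → i ≤ n - 1 → br (yN i) x = (2 * (i : ℂ) - 1) • yN i)
    (hxe : ∀ i, 1 ≤ i → i ≤ n → br x (eN i) = if i = 1 then (-2 : ℂ) • eN 1 else 0)
    (hxy : ∀ j, 1 ≤ j → j ≤ n - 1 → br x (yN j) = if j = 1 then -yN 1 else 0)
    (hxx : br x x = 0)
    -- the grading:
    (G : ZMod 2 → Submodule ℂ V)
    (hG0 : G 0 = Submodule.span ℂ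
      (insert x (Set.range fun i : Fin n => bas (Sum.inl i))))
    (hG1 : G 1 = Submodule.span ℂ
      (Set.range fun j : Fin (n - 1) => bas (Sum.inr (Sum.inr j)))) :
    -- SL satisfies the Leibniz superidentity:
    (∀ (α β : ZMod 2) (u : V), ∀ v ∈ G α, ∀ w ∈ G β,
      br u (br v w) = br (br u v) w - ((-1 : ℂ) ^ (α.val * β.val)) • br (br u w) v) ∧
    -- SL is solvable:
    (∃ k : ℕ, derSeries br k = ⊥) ∧
    -- N is nilpotent and [SL,SL] ⊆ N:
    (∃ k : ℕ, lcsIn br (Submodule.span ℂ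
      ((Set.range fun i : Fin n => bas (Sum.inl i)) ∪
        (Set.range fun j : Fin (n - 1) => bas (Sum.inr (Sum.inr j))))) k = ⊥) ∧
    (∀ u v : V, br u v ∈ Submodule.span ℂ
      ((Set.range fun i : Fin n => bas (Sum.inl i)) ∪
        (Set.range fun j : Fin (n - 1) => bas (Sum.inr (Sum.inr j))))) := by
  
  classical
  set ES : Set V := (Set.range fun i : Fin n => bas (Sum.inl i)) with hES
  set YS : Set V := (Set.range fun j : Fin (n - 1) => bas (Sum.inr (Sum.inr j))) with hYS
  set NN : Submodule ℂ V := Submodule.span ℂ (ES ∪ YS) with hNN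
  have e0 : ∀ k, n < k → eN k = 0 := fun k h => heN0 k (by omega)
  have y0 : ∀ k, n - 1 < k → yN k = 0 := fun k h => hyN0 k (by omega)
  have hbasE : ∀ i : Fin n, bas (Sum.inl i) = eN ((i : ℕ) + 1) := by
    intro i
    rw [heN ((i : ℕ) + 1) ⟨by omega, i.isLt⟩]
    congr 1
  have hbasY : ∀ j : Fin (n - 1), bas (Sum.inr (Sum.inr j)) = yN ((j : ℕ) + 1) := by
    intro j
    rw [hyN ((j : ℕ) + 1) ⟨by omega, j.isLt⟩]
    congr 1
  -- extended multiplication table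
  have Zee : ∀ i j, 2 ≤ j → br (eN i) (eN j) = 0 := by
    intro i j hj
    by_cases hi : 1 ≤ i ∧ i ≤ n
    · by_cases hjn : j ≤ n
      · exact hee0 i j hi.1 hi.2 hj hjn
      · rw [e0 j (by omega)]; simp
    · rw [heN0 i hi]; simp
  have Zye : ∀ j i, 2 ≤ i → br (yN j) (eN i) = 0 := by
    intro j i hi
    by_cases hj : 1 ≤ j ∧ j ≤ n - 1
    · by_cases hin : i ≤ n
      · exact hye0 j i hj.1 hj.2 hi hin
      · rw [e0 i (by omega)]; simp
    · rw [hyN0 j hj]; simp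
  have Zey : ∀ i j, 2 ≤ j → br (eN i) (yN j) = 0 := by
    intro i j hj
    by_cases hi : 1 ≤ i ∧ i ≤ n
    · by_cases hjn : j ≤ n - 1
      · exact hey0 i j hi.1 hi.2 hj hjn
      · rw [y0 j (by omega)]; simp
    · rw [heN0 i hi]; simp
  have Zyy : ∀ j k, 2 ≤ k → br (yN j) (yN k) = 0 := by
    intro j k hk
    by_cases hj : 1 ≤ j ∧ j ≤ n - 1
    · by_cases hkn : k ≤ n - 1
      · exact hyy0 j k hj.1 hj.2 hk hkn
      · rw [y0 k (by omega)]; simp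
    · rw [hyN0 j hj]; simp
  have ZxE : ∀ i, 2 ≤ i → br x (eN i) = 0 := by
    intro i hi
    by_cases h : i ≤ n
    · rw [hxe i (by omega) h, if_neg (by omega)]
    · rw [e0 i (by omega)]; simp
  have ZxY : ∀ j, 2 ≤ j → br x (yN j) = 0 := by
    intro j hj
    by_cases h : j ≤ n - 1
    · rw [hxy j (by omega) h, if_neg (by omega)]
    · rw [y0 j (by omega)]; simp
  have E11 : br (eN 1) (eN 1) = eN 3 := by rw [hee1 1 le_rfl (by omega)]; simp
  have E1 : ∀ i, 2 ≤ i → br (eN i) (eN 1) = eN (i + 1) := by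
    intro i hi
    by_cases h : i ≤ n
    · rw [hee1 i (by omega) h, if_neg (by omega)]
    · rw [e0 i (by omega), e0 (i + 1) (by omega)]; simp
  have Y1 : ∀ j, 1 ≤ j → br (yN j) (eN 1) = yN (j + 1) := by
    intro j hj
    by_cases h : j ≤ n - 1
    · exact hye1 j hj h
    · rw [y0 j (by omega), y0 (j + 1) (by omega)]; simp
  have EY1 : br (eN 1) (yN 1) = (1 / 2 : ℂ) • yN 2 := by
    rw [hey1 1 le_rfl (by omega)]; simp
  have EYi : ∀ i, 2 ≤ i → br (eN i) (yN 1) = (1 / 2 : ℂ) • yN i := by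
    intro i hi
    by_cases h : i ≤ n
    · rw [hey1 i (by omega) h, if_neg (by omega)]
    · rw [e0 i (by omega), y0 i (by omega)]; simp
  have YY1 : br (yN 1) (yN 1) = eN 1 := by
    rw [hyy1 1 le_rfl (by omega)]; simp
  have YYj : ∀ j, 2 ≤ j → br (yN j) (yN 1) = eN (j + 1) := by
    intro j hj
    by_cases h : j ≤ n - 1
    · rw [hyy1 j (by omega) h, if_neg (by omega)]
    · rw [y0 j (by omega), e0 (j + 1) (by omega)]; simp
  have EX1 : br (eN 1) x = (2 : ℂ) • eN 1 := by
    rw [hex 1 le_rfl (by omega)]; simp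
  have EXi : ∀ i, 2 ≤ i → br (eN i) x = (2 * ((i : ℂ) - 1)) • eN i := by
    intro i hi
    by_cases h : i ≤ n
    · rw [hex i (by omega) h, if_neg (by omega)]
    · rw [e0 i (by omega)]; simp
  have YX : ∀ i, 1 ≤ i → br (yN i) x = (2 * (i : ℂ) - 1) • yN i := by
    intro i hi
    by_cases h : i ≤ n - 1
    · exact hyx i hi h
    · rw [y0 i (by omega)]; simp
  have XE1 : br x (eN 1) = (-2 : ℂ) • eN 1 := by
    rw [hxe 1 le_rfl (by omega)]; simp
  have XY1 : br x (yN 1) = -yN 1 := by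
    rw [hxy 1 le_rfl (by omega)]; simp
  -- membership of basis vectors in N
  have hEmem : ∀ k, eN k ∈ NN := by
    intro k
    by_cases hk : 1 ≤ k ∧ k ≤ n
    · rw [heN k hk]
      exact Submodule.subset_span (Or.inl ⟨⟨k - 1, by omega⟩, rfl⟩)
    · rw [heN0 k hk]; exact zero_mem _
  have hYmem : ∀ k, yN k ∈ NN := by
    intro k
    by_cases hk : 1 ≤ k ∧ k ≤ n - 1
    · rw [hyN k hk]
      exact Submodule.subset_span (Or.inr ⟨⟨k - 1, by omega⟩, rfl⟩)
    · rw [hyN0 k hk]; exact zero_mem _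
  -- core Leibniz identity on generators
  have L00 : ∀ u, (u = x ∨ (∃ a, 1 ≤ a ∧ a ≤ n ∧ u = eN a) ∨ (∃ a, 1 ≤ a ∧ a ≤ n - 1 ∧ u = yN a)) →
      ∀ v, (v = x ∨ ∃ b, 1 ≤ b ∧ b ≤ n ∧ v = eN b) →
      ∀ w, (w = x ∨ ∃ c, 1 ≤ c ∧ c ≤ n ∧ w = eN c) →
      br u (br v w) = br (br u v) w - (1 : ℂ) • br (br u w) v := by
    rintro u hu v (rfl | ⟨b, hb1, hb2, rfl⟩) w (rfl | ⟨c, hc1, hc2, rfl⟩) <;> rw [one_smul]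
    · -- v = x, w = x
      rw [hxx]; simp
    · -- v = x, w = eN c
      rcases hu with rfl | ⟨a, ha1, ha2, rfl⟩ | ⟨a, ha1, ha2, rfl⟩
      · by_cases hc : c = 1
        · subst hc
          simp only [XE1, hxx, map_smul, LinearMap.smul_apply, map_zero,
            LinearMap.zero_apply, EX1]
          module
        · rw [hxe c hc1 hc2, if_neg hc, hxx]; simp
      · by_cases hc : c = 1
        · subst hc
          by_cases ha : a = 1
          · subst ha
            simp only [XE1, EX1, E11, EXi 3 (by omega), map_smul, LinearMap.smul_apply]
            module
          · simp only [XE1, EXi a (by omega), E1 a (by omega), EXi (a+1) (by omega),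
              map_smul, LinearMap.smul_apply]
            push_cast
            module
        · simp only [hxe c hc1 hc2, if_neg hc, hex a ha1 ha2, map_smul,
            LinearMap.smul_apply, Zee a c (by omega), map_zero, LinearMap.zero_apply,
            smul_zero, sub_zero]
      · by_cases hc : c = 1
        · subst hc
          simp only [XE1, map_smul, LinearMap.smul_apply, Y1 a ha1, YX a ha1,
            YX (a+1) (by omega)]
          push_cast
          module
        · simp only [hxe c hc1 hc2, if_neg hc, YX a ha1, map_smul, LinearMap.smul_apply,
            Zye a c (by omega), map_zero, LinearMap.zero_apply, smul_zero, sub_zero]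
    · -- v = eN b, w = x
      rcases hu with rfl | ⟨a, ha1, ha2, rfl⟩ | ⟨a, ha1, ha2, rfl⟩
      · by_cases hb : b = 1
        · subst hb
          simp only [EX1, XE1, hxx, map_smul, LinearMap.smul_apply, map_zero,
            LinearMap.zero_apply]
          module
        · simp only [hex b hb1 hb2, if_neg hb, map_smul, LinearMap.smul_apply,
            ZxE b (by omega), hxx, map_zero, LinearMap.zero_apply, smul_zero, zero_sub,
            neg_zero, sub_zero]
      · by_cases hb : b = 1
        · subst hb
          by_cases ha : a = 1
          · subst ha
            simp only [EX1, E11, EXi 3 (by omega), map_smul, LinearMap.smul_apply]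
            module
          · simp only [EX1, E1 a (by omega), EXi a (by omega), EXi (a+1) (by omega),
              map_smul, LinearMap.smul_apply]
            push_cast
            module
        · simp only [hex b hb1 hb2, if_neg hb, hex a ha1 ha2, map_smul,
            LinearMap.smul_apply, Zee a b (by omega), map_zero, LinearMap.zero_apply,
            smul_zero, sub_zero]
      · by_cases hb : b = 1
        · subst hb
          simp only [EX1, map_smul, LinearMap.smul_apply, Y1 a ha1, YX a ha1,
            YX (a+1) (by omega)]
          push_cast
          module
        · simp only [hex b hb1 hb2, if_neg hb, YX a ha1, map_smul, LinearMap.smul_apply,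
            Zye a b (by omega), map_zero, LinearMap.zero_apply, smul_zero, sub_zero]
    · -- v = eN b, w = eN c
      by_cases hb : b = 1 <;> by_cases hc : c = 1
      · subst hb; subst hc
        rw [E11, sub_self]
        rcases hu with rfl | ⟨a, ha1, ha2, rfl⟩ | ⟨a, ha1, ha2, rfl⟩
        · exact ZxE 3 (by omega)
        · exact Zee a 3 (by omega)
        · exact Zye a 3 (by omega)
      · subst hb
        rcases hu with rfl | ⟨a, ha1, ha2, rfl⟩ | ⟨a, ha1, ha2, rfl⟩
        · simp only [Zee 1 c (by omega), XE1, map_smul, LinearMap.smul_apply,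
            ZxE c (by omega), map_zero, LinearMap.zero_apply, smul_zero, sub_zero]
        · by_cases ha : a = 1
          · subst ha
            simp only [Zee 1 c (by omega), E11, Zee 3 c (by omega), map_zero,
              LinearMap.zero_apply, sub_zero]
          · simp only [Zee 1 c (by omega), E1 a (by omega), Zee (a+1) c (by omega),
              Zee a c (by omega), map_zero, LinearMap.zero_apply, sub_zero]
        · simp only [Zee 1 c (by omega), Y1 a ha1, Zye (a+1) c (by omega),
            Zye a c (by omega), map_zero, LinearMap.zero_apply, sub_zero]
      · subst hc
        rcases hu with rfl | ⟨a, ha1, ha2, rfl⟩ | ⟨a, ha1, ha2, rfl⟩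
        · simp only [E1 b (by omega), ZxE (b+1) (by omega), ZxE b (by omega), XE1,
            map_smul, LinearMap.smul_apply, Zee 1 b (by omega), map_zero,
            LinearMap.zero_apply, smul_zero, sub_zero]
        · by_cases ha : a = 1
          · subst ha
            simp only [E1 b (by omega), Zee 1 (b+1) (by omega), Zee 1 b (by omega),
              E11, Zee 3 b (by omega), map_zero, LinearMap.zero_apply, sub_zero]
          · simp only [E1 b (by omega), Zee a (b+1) (by omega), Zee a b (by omega),
              E1 a (by omega), Zee (a+1) b (by omega), map_zero, LinearMap.zero_apply,
              sub_zero]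
        · simp only [E1 b (by omega), Zye a (b+1) (by omega), Zye a b (by omega),
            Y1 a ha1, Zye (a+1) b (by omega), map_zero, LinearMap.zero_apply, sub_zero]
      · rcases hu with rfl | ⟨a, ha1, ha2, rfl⟩ | ⟨a, ha1, ha2, rfl⟩
        · simp only [Zee b c (by omega), ZxE b (by omega), ZxE c (by omega), map_zero,
            LinearMap.zero_apply, sub_zero]
        · simp only [Zee b c (by omega), Zee a b (by omega), Zee a c (by omega),
            map_zero, LinearMap.zero_apply, sub_zero]
        · simp only [Zee b c (by omega), Zye a b (by omega), Zye a c (by omega),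
            map_zero, LinearMap.zero_apply, sub_zero]
  have L01 : ∀ u, (u = x ∨ (∃ a, 1 ≤ a ∧ a ≤ n ∧ u = eN a) ∨ (∃ a, 1 ≤ a ∧ a ≤ n - 1 ∧ u = yN a)) →
      ∀ v, (v = x ∨ ∃ b, 1 ≤ b ∧ b ≤ n ∧ v = eN b) →
      ∀ w, (∃ c, 1 ≤ c ∧ c ≤ n - 1 ∧ w = yN c) →
      br u (br v w) = br (br u v) w - (1 : ℂ) • br (br u w) v := by
    rintro u hu v (rfl | ⟨b, hb1, hb2, rfl⟩) w ⟨c, hc1, hc2, rfl⟩ <;> rw [one_smul]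
    · -- v = x, w = yN c
      rcases hu with rfl | ⟨a, ha1, ha2, rfl⟩ | ⟨a, ha1, ha2, rfl⟩
      · by_cases hc : c = 1
        · subst hc
          simp only [XY1, hxx, map_neg, LinearMap.neg_apply, map_zero,
            LinearMap.zero_apply, YX 1 (by omega)]
          push_cast
          module
        · simp only [hxy c hc1 hc2, if_neg hc, hxx, map_zero, LinearMap.zero_apply,
            sub_zero]
      · by_cases hc : c = 1
        · subst hc
          by_cases ha : a = 1
          · subst ha
            simp only [XY1, map_neg, EX1, EY1, map_smul, LinearMap.smul_apply,
              LinearMap.neg_apply, YX 2 (by omega)]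
            push_cast
            module
          · simp only [XY1, map_neg, LinearMap.neg_apply, EXi a (by omega),
              EYi a (by omega), map_smul, LinearMap.smul_apply, YX a ha1]
            module
        · simp only [hxy c hc1 hc2, if_neg hc, hex a ha1 ha2, map_smul,
            LinearMap.smul_apply, Zey a c (by omega), map_zero, LinearMap.zero_apply,
            smul_zero, sub_zero]
      · by_cases hc : c = 1
        · subst hc
          by_cases ha : a = 1
          · subst ha
            simp only [XY1, map_neg, LinearMap.neg_apply, YY1, YX 1 (by omega),
              map_smul, LinearMap.smul_apply, EX1]
            push_cast
            module
          · simp only [XY1, map_neg, LinearMap.neg_apply, YYj a (by omega), YX a ha1,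
              map_smul, LinearMap.smul_apply, EXi (a+1) (by omega)]
            push_cast
            module
        · simp only [hxy c hc1 hc2, if_neg hc, YX a ha1, map_smul, LinearMap.smul_apply,
            Zyy a c (by omega), map_zero, LinearMap.zero_apply, smul_zero, sub_zero]
    · -- v = eN b, w = yN c
      by_cases hb : b = 1 <;> by_cases hc : c = 1
      · subst hb; subst hc
        rcases hu with rfl | ⟨a, ha1, ha2, rfl⟩ | ⟨a, ha1, ha2, rfl⟩
        · simp only [EY1, map_smul, LinearMap.smul_apply, ZxY 2 (by omega), smul_zero,
            XE1, XY1, map_neg, LinearMap.neg_apply, Y1 1 (by omega)]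
          module
        · by_cases ha : a = 1
          · subst ha
            simp only [EY1, map_smul, LinearMap.smul_apply, Zey 1 2 (by omega),
              smul_zero, E11, EYi 3 (by omega), Y1 2 (by omega)]
            module
          · simp only [EY1, map_smul, LinearMap.smul_apply, Zey a 2 (by omega),
              smul_zero, E1 a (by omega), EYi (a+1) (by omega), EYi a (by omega),
              Y1 a ha1]
            module
        · by_cases ha : a = 1
          · subst ha
            simp only [EY1, map_smul, LinearMap.smul_apply, Zyy 1 2 (by omega),
              smul_zero, Y1 1 (by omega), YYj 2 (by omega), YY1, E11]
            module
          · simp only [EY1, map_smul, LinearMap.smul_apply, Zyy a 2 (by omega),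
              smul_zero, Y1 a ha1, YYj (a+1) (by omega), YYj a (by omega),
              E1 (a+1) (by omega)]
            module
      · subst hb
        rcases hu with rfl | ⟨a, ha1, ha2, rfl⟩ | ⟨a, ha1, ha2, rfl⟩
        · simp only [Zey 1 c (by omega), XE1, map_smul, LinearMap.smul_apply,
            ZxY c (by omega), map_zero, LinearMap.zero_apply, smul_zero, sub_zero]
        · by_cases ha : a = 1
          · subst ha
            simp only [Zey 1 c (by omega), E11, Zey 3 c (by omega), map_zero,
              LinearMap.zero_apply, sub_zero]
          · simp only [Zey 1 c (by omega), E1 a (by omega), Zey (a+1) c (by omega),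
              Zey a c (by omega), map_zero, LinearMap.zero_apply, sub_zero]
        · simp only [Zey 1 c (by omega), Y1 a ha1, Zyy (a+1) c (by omega),
            Zyy a c (by omega), map_zero, LinearMap.zero_apply, sub_zero]
      · subst hc
        rcases hu with rfl | ⟨a, ha1, ha2, rfl⟩ | ⟨a, ha1, ha2, rfl⟩
        · simp only [EYi b (by omega), map_smul, ZxY b (by omega), smul_zero,
            ZxE b (by omega), map_zero, LinearMap.zero_apply, XY1, map_neg,
            LinearMap.neg_apply, Zye 1 b (by omega), neg_zero, sub_zero]
        · by_cases ha : a = 1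
          · subst ha
            simp only [EYi b (by omega), map_smul, Zey 1 b (by omega), smul_zero,
              Zee 1 b (by omega), map_zero, LinearMap.zero_apply, EY1,
              LinearMap.smul_apply, Zye 2 b (by omega), sub_zero]
          · simp only [EYi b (by omega), map_smul, Zey a b (by omega), smul_zero,
              Zee a b (by omega), map_zero, LinearMap.zero_apply, EYi a (by omega),
              LinearMap.smul_apply, Zye a b (by omega), sub_zero]
        · by_cases ha : a = 1
          · subst ha
            simp only [EYi b (by omega), map_smul, Zyy 1 b (by omega), smul_zero,
              Zye 1 b (by omega), map_zero, LinearMap.zero_apply, YY1,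
              Zee 1 b (by omega), sub_zero]
          · simp only [EYi b (by omega), map_smul, Zyy a b (by omega), smul_zero,
              Zye a b (by omega), map_zero, LinearMap.zero_apply, YYj a (by omega),
              Zee (a+1) b (by omega), sub_zero]
      · rcases hu with rfl | ⟨a, ha1, ha2, rfl⟩ | ⟨a, ha1, ha2, rfl⟩
        · simp only [Zey b c (by omega), ZxE b (by omega), ZxY c (by omega), map_zero,
            LinearMap.zero_apply, sub_zero]
        · simp only [Zey b c (by omega), Zee a b (by omega), Zey a c (by omega),
            map_zero, LinearMap.zero_apply, sub_zero]
        · simp only [Zey b c (by omega), Zye a b (by omega), Zyy a c (by omega),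
            map_zero, LinearMap.zero_apply, sub_zero]
  have L10 : ∀ u, (u = x ∨ (∃ a, 1 ≤ a ∧ a ≤ n ∧ u = eN a) ∨ (∃ a, 1 ≤ a ∧ a ≤ n - 1 ∧ u = yN a)) →
      ∀ v, (∃ b, 1 ≤ b ∧ b ≤ n - 1 ∧ v = yN b) →
      ∀ w, (w = x ∨ ∃ c, 1 ≤ c ∧ c ≤ n ∧ w = eN c) →
      br u (br v w) = br (br u v) w - (1 : ℂ) • br (br u w) v := by
    rintro u hu v ⟨b, hb1, hb2, rfl⟩ w (rfl | ⟨c, hc1, hc2, rfl⟩) <;> rw [one_smul]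
    · -- w = x
      by_cases hb : b = 1
      · subst hb
        rcases hu with rfl | ⟨a, ha1, ha2, rfl⟩ | ⟨a, ha1, ha2, rfl⟩
        · simp only [YX 1 (by omega), map_smul, LinearMap.smul_apply, XY1, map_neg,
            LinearMap.neg_apply, hxx, map_zero, LinearMap.zero_apply, sub_zero]
          push_cast
          module
        · by_cases ha : a = 1
          · subst ha
            simp only [YX 1 (by omega), EY1, map_smul, LinearMap.smul_apply,
              YX 2 (by omega), EX1]
            push_cast
            module
          · simp only [YX 1 (by omega), EYi a (by omega), map_smul,
              LinearMap.smul_apply, YX a ha1, EXi a (by omega)]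
            push_cast
            module
        · by_cases ha : a = 1
          · subst ha
            simp only [YX 1 (by omega), YY1, EX1, map_smul, LinearMap.smul_apply]
            push_cast
            module
          · simp only [YX 1 (by omega), YYj a (by omega), EXi (a+1) (by omega),
              map_smul, LinearMap.smul_apply, YX a ha1]
            push_cast
            module
      · rcases hu with rfl | ⟨a, ha1, ha2, rfl⟩ | ⟨a, ha1, ha2, rfl⟩
        · simp only [YX b hb1, map_smul, LinearMap.smul_apply, ZxY b (by omega),
            smul_zero, map_zero, LinearMap.zero_apply, hxx, sub_zero]
        · simp only [YX b hb1, map_smul, LinearMap.smul_apply, Zey a b (by omega),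
            smul_zero, map_zero, LinearMap.zero_apply, hex a ha1 ha2, sub_zero]
        · simp only [YX b hb1, map_smul, LinearMap.smul_apply, Zyy a b (by omega),
            smul_zero, map_zero, LinearMap.zero_apply, YX a ha1, sub_zero]
    · -- w = eN c
      by_cases hb : b = 1 <;> by_cases hc : c = 1
      · subst hb; subst hc
        rcases hu with rfl | ⟨a, ha1, ha2, rfl⟩ | ⟨a, ha1, ha2, rfl⟩
        · simp only [Y1 1 (by omega), ZxY 2 (by omega), XY1, map_neg,
            LinearMap.neg_apply, XE1, map_smul, LinearMap.smul_apply, EY1]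
          module
        · by_cases ha : a = 1
          · subst ha
            simp only [Y1 1 (by omega), Zey 1 2 (by omega), EY1, map_smul,
              LinearMap.smul_apply, Y1 2 (by omega), E11, EYi 3 (by omega)]
            module
          · simp only [Y1 1 (by omega), Zey a 2 (by omega), EYi a (by omega),
              map_smul, LinearMap.smul_apply, Y1 a ha1, E1 a (by omega),
              EYi (a+1) (by omega)]
            module
        · by_cases ha : a = 1
          · subst ha
            simp only [Y1 1 (by omega), Zyy 1 2 (by omega), YY1, E11,
              YYj 2 (by omega)]
            module
          · simp only [Y1 1 (by omega), Zyy a 2 (by omega), YYj a (by omega),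
              E1 (a+1) (by omega), Y1 a ha1, YYj (a+1) (by omega)]
            module
      · subst hb
        rcases hu with rfl | ⟨a, ha1, ha2, rfl⟩ | ⟨a, ha1, ha2, rfl⟩
        · simp only [Zye 1 c (by omega), XY1, map_neg, LinearMap.neg_apply,
            ZxE c (by omega), map_zero, LinearMap.zero_apply, neg_zero, sub_zero]
        · by_cases ha : a = 1
          · subst ha
            simp only [Zye 1 c (by omega), EY1, map_smul, LinearMap.smul_apply,
              Zye 2 c (by omega), smul_zero, Zee 1 c (by omega), map_zero,
              LinearMap.zero_apply, sub_zero]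
          · simp only [Zye 1 c (by omega), EYi a (by omega), map_smul,
              LinearMap.smul_apply, Zye a c (by omega), smul_zero, Zee a c (by omega),
              map_zero, LinearMap.zero_apply, sub_zero]
        · by_cases ha : a = 1
          · subst ha
            simp only [Zye 1 c (by omega), YY1, Zee 1 c (by omega), map_zero,
              LinearMap.zero_apply, sub_zero]
          · simp only [Zye 1 c (by omega), YYj a (by omega), Zee (a+1) c (by omega),
              Zye a c (by omega), map_zero, LinearMap.zero_apply, sub_zero]
      · subst hc
        rcases hu with rfl | ⟨a, ha1, ha2, rfl⟩ | ⟨a, ha1, ha2, rfl⟩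
        · simp only [Y1 b hb1, ZxY (b+1) (by omega), ZxY b (by omega), map_zero,
            LinearMap.zero_apply, XE1, map_smul, LinearMap.smul_apply,
            Zey 1 b (by omega), smul_zero, sub_zero]
        · by_cases ha : a = 1
          · subst ha
            simp only [Y1 b hb1, Zey 1 (b+1) (by omega), Zey 1 b (by omega),
              map_zero, LinearMap.zero_apply, E11, Zey 3 b (by omega), sub_zero]
          · simp only [Y1 b hb1, Zey a (b+1) (by omega), Zey a b (by omega),
              map_zero, LinearMap.zero_apply, E1 a (by omega), Zey (a+1) b (by omega),
              sub_zero]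
        · simp only [Y1 b hb1, Zyy a (b+1) (by omega), Zyy a b (by omega), map_zero,
            LinearMap.zero_apply, Y1 a ha1, Zyy (a+1) b (by omega), sub_zero]
      · rcases hu with rfl | ⟨a, ha1, ha2, rfl⟩ | ⟨a, ha1, ha2, rfl⟩
        · simp only [Zye b c (by omega), ZxY b (by omega), ZxE c (by omega), map_zero,
            LinearMap.zero_apply, sub_zero]
        · simp only [Zye b c (by omega), Zey a b (by omega), Zee a c (by omega),
            map_zero, LinearMap.zero_apply, sub_zero]
        · simp only [Zye b c (by omega), Zyy a b (by omega), Zye a c (by omega),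
            map_zero, LinearMap.zero_apply, sub_zero]
  have L11 : ∀ u, (u = x ∨ (∃ a, 1 ≤ a ∧ a ≤ n ∧ u = eN a) ∨ (∃ a, 1 ≤ a ∧ a ≤ n - 1 ∧ u = yN a)) →
      ∀ v, (∃ b, 1 ≤ b ∧ b ≤ n - 1 ∧ v = yN b) →
      ∀ w, (∃ c, 1 ≤ c ∧ c ≤ n - 1 ∧ w = yN c) →
      br u (br v w) = br (br u v) w - (-1 : ℂ) • br (br u w) v := by
    rintro u hu v ⟨b, hb1, hb2, rfl⟩ w ⟨c, hc1, hc2, rfl⟩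
    rw [neg_smul, one_smul, sub_neg_eq_add]
    by_cases hb : b = 1 <;> by_cases hc : c = 1
    · subst hb; subst hc
      rcases hu with rfl | ⟨a, ha1, ha2, rfl⟩ | ⟨a, ha1, ha2, rfl⟩
      · simp only [YY1, XE1, XY1, map_neg, LinearMap.neg_apply]
        module
      · by_cases ha : a = 1
        · subst ha
          simp only [YY1, E11, EY1, map_smul, LinearMap.smul_apply, YYj 2 (by omega)]
          module
        · simp only [YY1, E1 a (by omega), EYi a (by omega), map_smul,
            LinearMap.smul_apply, YYj a (by omega)]
          module
      · by_cases ha : a = 1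
        · subst ha
          simp only [YY1, Y1 1 (by omega), EY1]
          module
        · simp only [YY1, Y1 a ha1, YYj a (by omega), EYi (a+1) (by omega)]
          module
    · subst hb
      rcases hu with rfl | ⟨a, ha1, ha2, rfl⟩ | ⟨a, ha1, ha2, rfl⟩
      · simp only [Zyy 1 c (by omega), XY1, map_neg, LinearMap.neg_apply,
          ZxY c (by omega), map_zero, LinearMap.zero_apply, neg_zero, add_zero]
      · by_cases ha : a = 1
        · subst ha
          simp only [Zyy 1 c (by omega), EY1, map_smul, LinearMap.smul_apply,
            Zyy 2 c (by omega), smul_zero, Zey 1 c (by omega), map_zero,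
            LinearMap.zero_apply, add_zero]
        · simp only [Zyy 1 c (by omega), EYi a (by omega), map_smul,
            LinearMap.smul_apply, Zyy a c (by omega), smul_zero, Zey a c (by omega),
            map_zero, LinearMap.zero_apply, add_zero]
      · by_cases ha : a = 1
        · subst ha
          simp only [Zyy 1 c (by omega), YY1, Zey 1 c (by omega), map_zero,
            LinearMap.zero_apply, add_zero]
        · simp only [Zyy 1 c (by omega), YYj a (by omega), Zey (a+1) c (by omega),
            Zyy a c (by omega), map_zero, LinearMap.zero_apply, add_zero]
    · subst hc
      rcases hu with rfl | ⟨a, ha1, ha2, rfl⟩ | ⟨a, ha1, ha2, rfl⟩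
      · simp only [YYj b (by omega), ZxE (b+1) (by omega), ZxY b (by omega), map_zero,
          LinearMap.zero_apply, XY1, map_neg, LinearMap.neg_apply, Zyy 1 b (by omega),
          neg_zero, add_zero, zero_add]
      · by_cases ha : a = 1
        · subst ha
          simp only [YYj b (by omega), Zee 1 (b+1) (by omega), Zey 1 b (by omega),
            map_zero, LinearMap.zero_apply, EY1, map_smul, LinearMap.smul_apply,
            Zyy 2 b (by omega), smul_zero, add_zero, zero_add]
        · simp only [YYj b (by omega), Zee a (b+1) (by omega), Zey a b (by omega),
            map_zero, LinearMap.zero_apply, EYi a (by omega), map_smul,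
            LinearMap.smul_apply, Zyy a b (by omega), smul_zero, add_zero, zero_add]
      · by_cases ha : a = 1
        · subst ha
          simp only [YYj b (by omega), Zye 1 (b+1) (by omega), Zyy 1 b (by omega),
            map_zero, LinearMap.zero_apply, YY1, Zey 1 b (by omega), add_zero,
            zero_add]
        · simp only [YYj b (by omega), Zye a (b+1) (by omega), Zyy a b (by omega),
            map_zero, LinearMap.zero_apply, YYj a (by omega), Zey (a+1) b (by omega),
            add_zero, zero_add]
    · rcases hu with rfl | ⟨a, ha1, ha2, rfl⟩ | ⟨a, ha1, ha2, rfl⟩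
      · simp only [Zyy b c (by omega), ZxY b (by omega), ZxY c (by omega), map_zero,
          LinearMap.zero_apply, add_zero]
      · simp only [Zyy b c (by omega), Zey a b (by omega), Zey a c (by omega),
          map_zero, LinearMap.zero_apply, add_zero]
      · simp only [Zyy b c (by omega), Zyy a b (by omega), Zyy a c (by omega),
          map_zero, LinearMap.zero_apply, add_zero]
  -- every bracket lands in N
  have hbr : ∀ u v : V, br u v ∈ NN := by
    have hgen : ∀ a ∈ (Set.range bas : Set V), ∀ b ∈ (Set.range bas : Set V),
        br a b ∈ NN := by
      rintro a ⟨i, rfl⟩ b ⟨j, rfl⟩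
      rcases i with i | ⟨⟩ | i <;> rcases j with j | ⟨⟩ | j
      · rw [hbasE i, hbasE j]
        by_cases hj1 : (j : ℕ) + 1 = 1
        · rw [hj1]
          by_cases hi1 : (i : ℕ) + 1 = 1
          · rw [hi1, E11]; exact hEmem 3
          · rw [E1 _ (by omega)]; exact hEmem _
        · rw [Zee _ _ (by omega)]; exact zero_mem _
      · rw [hbasE i, ← hx]
        by_cases hi1 : (i : ℕ) + 1 = 1
        · rw [hi1, EX1]; exact Submodule.smul_mem _ _ (hEmem 1)
        · rw [EXi _ (by omega)]; exact Submodule.smul_mem _ _ (hEmem _)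
      · rw [hbasE i, hbasY j]
        by_cases hj1 : (j : ℕ) + 1 = 1
        · rw [hj1]
          by_cases hi1 : (i : ℕ) + 1 = 1
          · rw [hi1, EY1]; exact Submodule.smul_mem _ _ (hYmem 2)
          · rw [EYi _ (by omega)]; exact Submodule.smul_mem _ _ (hYmem _)
        · rw [Zey _ _ (by omega)]; exact zero_mem _
      · rw [← hx, hbasE j]
        by_cases hj1 : (j : ℕ) + 1 = 1
        · rw [hj1, XE1]; exact Submodule.smul_mem _ _ (hEmem 1)
        · rw [ZxE _ (by omega)]; exact zero_mem _
      · rw [← hx, hxx]; exact zero_mem _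
      · rw [← hx, hbasY j]
        by_cases hj1 : (j : ℕ) + 1 = 1
        · rw [hj1, XY1]; exact neg_mem (hYmem 1)
        · rw [ZxY _ (by omega)]; exact zero_mem _
      · rw [hbasY i, hbasE j]
        by_cases hj1 : (j : ℕ) + 1 = 1
        · rw [hj1, Y1 _ (by omega)]; exact hYmem _
        · rw [Zye _ _ (by omega)]; exact zero_mem _
      · rw [hbasY i, ← hx, YX _ (by omega)]
        exact Submodule.smul_mem _ _ (hYmem _)
      · rw [hbasY i, hbasY j]
        by_cases hj1 : (j : ℕ) + 1 = 1
        · rw [hj1]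
          by_cases hi1 : (i : ℕ) + 1 = 1
          · rw [hi1, YY1]; exact hEmem 1
          · rw [YYj _ (by omega)]; exact hEmem _
        · rw [Zyy _ _ (by omega)]; exact zero_mem _
    intro u v
    have hu : u ∈ Submodule.span ℂ (Set.range bas) := by
      rw [bas.span_eq]; exact Submodule.mem_top
    have hv : v ∈ Submodule.span ℂ (Set.range bas) := by
      rw [bas.span_eq]; exact Submodule.mem_top
    exact bilHelper br NN _ _ hgen u hu v hv
  -- weight filtration
  set SK : ℕ → Submodule ℂ V := fun K => Submodule.span ℂ
    ({v | ∃ i, 1 ≤ i ∧ i ≤ n ∧ K ≤ (if i = 1 then 2 else 2 * (i - 1)) ∧ v = eN i} ∪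
     {v | ∃ j, 1 ≤ j ∧ j ≤ n - 1 ∧ K ≤ 2 * j - 1 ∧ v = yN j}) with hSK
  have hSE : ∀ K i, 1 ≤ i → K ≤ (if i = 1 then 2 else 2 * (i - 1)) → eN i ∈ SK K := by
    intro K i h1 h2
    by_cases h : i ≤ n
    · simp only [hSK]
      exact Submodule.subset_span (Or.inl ⟨i, h1, h, h2, rfl⟩)
    · rw [e0 i (by omega)]; exact zero_mem _
  have hSY : ∀ K j, 1 ≤ j → K ≤ 2 * j - 1 → yN j ∈ SK K := by
    intro K j h1 h2
    by_cases h : j ≤ n - 1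
    · simp only [hSK]
      exact Submodule.subset_span (Or.inr ⟨j, h1, h, h2, rfl⟩)
    · rw [y0 j (by omega)]; exact zero_mem _
  have hSle : ∀ K, SK K ≤ NN := by
    intro K
    simp only [hSK]
    refine Submodule.span_le.2 ?_
    rintro v (⟨i, hi1, hi2, _, rfl⟩ | ⟨j, hj1, hj2, _, rfl⟩)
    exacts [hEmem i, hYmem j]
  have hNle : NN ≤ SK 1 := by
    rw [hNN]
    refine Submodule.span_le.2 ?_
    rintro v (⟨i, rfl⟩ | ⟨j, rfl⟩)
    · beta_reduce
      rw [hbasE i]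
      exact hSE 1 _ (by omega) (by split <;> omega)
    · beta_reduce
      rw [hbasY j]
      exact hSY 1 _ (by omega) (by omega)
  have hlcs : ∀ k, lcsIn br NN k ≤ SK (k + 1) := by
    intro k
    induction k with
    | zero => exact hNle
    | succ k ih =>
      refine Submodule.span_le.2 ?_
      rintro z ⟨a, ha, b, hb, rfl⟩
      have ha' : a ∈ Submodule.span ℂ
          ({v | ∃ i, 1 ≤ i ∧ i ≤ n ∧ k + 1 ≤ (if i = 1 then 2 else 2 * (i - 1)) ∧ v = eN i} ∪
           {v | ∃ j, 1 ≤ j ∧ j ≤ n - 1 ∧ k + 1 ≤ 2 * j - 1 ∧ v = yN j}) := by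
        have := ih ha
        simpa only [hSK] using this
      have hb' : b ∈ Submodule.span ℂ (ES ∪ YS) := by rw [← hNN]; exact hb
      refine bilHelper br (SK (k + 1 + 1)) _ _ ?_ a ha' b hb'
      rintro a' (⟨i, hi1, hi2, hiw, rfl⟩ | ⟨j, hj1, hj2, hjw, rfl⟩) b'
          (⟨m, rfl⟩ | ⟨m, rfl⟩)
      · beta_reduce
        rw [hbasE m]
        by_cases hm : (m : ℕ) + 1 = 1
        · rw [hm]
          by_cases hi' : i = 1
          · subst hi'
            rw [E11]
            rw [if_pos rfl] at hiw
            exact hSE _ 3 (by omega) (by rw [if_neg (by omega)]; omega)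
          · rw [E1 i (by omega)]
            rw [if_neg hi'] at hiw
            exact hSE _ (i + 1) (by omega) (by rw [if_neg (by omega)]; omega)
        · rw [Zee _ _ (by omega)]; exact zero_mem _
      · beta_reduce
        rw [hbasY m]
        by_cases hm : (m : ℕ) + 1 = 1
        · rw [hm]
          by_cases hi' : i = 1
          · subst hi'
            rw [EY1]
            rw [if_pos rfl] at hiw
            exact Submodule.smul_mem _ _ (hSY _ 2 (by omega) (by omega))
          · rw [EYi i (by omega)]
            rw [if_neg hi'] at hiw
            exact Submodule.smul_mem _ _ (hSY _ i (by omega) (by omega))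
        · rw [Zey _ _ (by omega)]; exact zero_mem _
      · beta_reduce
        rw [hbasE m]
        by_cases hm : (m : ℕ) + 1 = 1
        · rw [hm, Y1 j hj1]
          exact hSY _ (j + 1) (by omega) (by omega)
        · rw [Zye _ _ (by omega)]; exact zero_mem _
      · beta_reduce
        rw [hbasY m]
        by_cases hm : (m : ℕ) + 1 = 1
        · rw [hm]
          by_cases hj' : j = 1
          · subst hj'
            rw [YY1]
            exact hSE _ 1 (by omega) (by rw [if_pos rfl]; omega)
          · rw [YYj j (by omega)]
            exact hSE _ (j + 1) (by omega) (by rw [if_neg (by omega)]; omega)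
        · rw [Zyy _ _ (by omega)]; exact zero_mem _
  have hbot : SK (2 * n + 1) ≤ ⊥ := by
    simp only [hSK]
    refine Submodule.span_le.2 ?_
    rintro v (⟨i, hi1, hi2, hw, rfl⟩ | ⟨j, hj1, hj2, hw, rfl⟩)
    · exfalso
      by_cases hi : i = 1
      · rw [if_pos hi] at hw; omega
      · rw [if_neg hi] at hw; omega
    · exfalso; omega
  have hder : ∀ k, derSeries br (k + 1) ≤ lcsIn br NN k := by
    intro k
    induction k with
    | zero =>
      refine Submodule.span_le.2 ?_
      rintro z ⟨a, -, b, -, rfl⟩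
      exact hbr a b
    | succ k ih =>
      refine Submodule.span_le.2 ?_
      rintro z ⟨a, ha, b, hb, rfl⟩
      have hbN : b ∈ NN := hSle _ (hlcs k (ih hb))
      exact Submodule.subset_span ⟨a, ih ha, b, hbN, rfl⟩
  refine ⟨?_, ?_, ?_, ?_⟩
  · -- Leibniz superidentity
    intro α β u v hv w hw
    have hPU : ∀ z ∈ (Set.range bas : Set V),
        z = x ∨ (∃ a, 1 ≤ a ∧ a ≤ n ∧ z = eN a) ∨ (∃ a, 1 ≤ a ∧ a ≤ n - 1 ∧ z = yN a) := by
      rintro z ⟨i, rfl⟩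
      rcases i with i | ⟨⟩ | i
      · exact Or.inr (Or.inl ⟨(i : ℕ) + 1, by omega, by omega, hbasE i⟩)
      · exact Or.inl hx.symm
      · exact Or.inr (Or.inr ⟨(i : ℕ) + 1, by omega, by omega, hbasY i⟩)
    have hPE : ∀ z ∈ insert x ES, z = x ∨ (∃ a, 1 ≤ a ∧ a ≤ n ∧ z = eN a) := by
      rintro z (rfl | ⟨i, rfl⟩)
      · exact Or.inl rfl
      · exact Or.inr ⟨(i : ℕ) + 1, by omega, by omega, hbasE i⟩
    have hPY : ∀ z ∈ YS, ∃ a, 1 ≤ a ∧ a ≤ n - 1 ∧ z = yN a := by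
      rintro z ⟨j, rfl⟩
      exact ⟨(j : ℕ) + 1, by omega, by omega, hbasY j⟩
    have hu : u ∈ Submodule.span ℂ (Set.range bas) := by
      rw [bas.span_eq]; exact Submodule.mem_top
    have hcases : ∀ γ : ZMod 2, γ = 0 ∨ γ = 1 := by decide
    rcases hcases α with rfl | rfl <;> rcases hcases β with rfl | rfl
    · rw [hG0] at hv hw
      rw [show ((0 : ZMod 2).val * (0 : ZMod 2).val) = 0 from by decide, pow_zero]
      exact trilHelper br 1 _ _ _
        (fun u0 hu0 v0 hv0 w0 hw0 => L00 u0 (hPU u0 hu0) v0 (hPE v0 hv0) w0 (hPE w0 hw0))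
        u hu v hv w hw
    · rw [hG0] at hv; rw [hG1] at hw
      rw [show ((0 : ZMod 2).val * (1 : ZMod 2).val) = 0 from by decide, pow_zero]
      exact trilHelper br 1 _ _ _
        (fun u0 hu0 v0 hv0 w0 hw0 => L01 u0 (hPU u0 hu0) v0 (hPE v0 hv0) w0 (hPY w0 hw0))
        u hu v hv w hw
    · rw [hG1] at hv; rw [hG0] at hw
      rw [show ((1 : ZMod 2).val * (0 : ZMod 2).val) = 0 from by decide, pow_zero]
      exact trilHelper br 1 _ _ _
        (fun u0 hu0 v0 hv0 w0 hw0 => L10 u0 (hPU u0 hu0) v0 (hPY v0 hv0) w0 (hPE w0 hw0))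
        u hu v hv w hw
    · rw [hG1] at hv hw
      rw [show ((1 : ZMod 2).val * (1 : ZMod 2).val) = 1 from by decide, pow_one]
      exact trilHelper br (-1) _ _ _
        (fun u0 hu0 v0 hv0 w0 hw0 => L11 u0 (hPU u0 hu0) v0 (hPY v0 hv0) w0 (hPY w0 hw0))
        u hu v hv w hw
  · -- solvable
    exact ⟨2 * n + 1, le_bot_iff.1 ((hder (2 * n)).trans ((hlcs (2 * n)).trans hbot))⟩
  · -- N nilpotent
    exact ⟨2 * n, le_bot_iff.1 ((hlcs (2 * n)).trans hbot)⟩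
  · -- [SL, SL] ⊆ N
    exact hbr
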